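/- For equal staging with N stages, total mass budget m_b > 0, and dry mass m_d > 0, the flight time T_N = (e_b c_T m_b / N) Σ_{i=1}^N (m_d + (i/N) m_b)^{-3/2} is strictly increasing in N, i.e., T_{N+1} > T_N for all N ≥ 1. -/

import Mathlib

open Finset

private lemma aux_convexOn_rpow_neg :
    ConvexOn ℝ (Set.Ioi (0 : ℝ)) (fun y : ℝ => y ^ (-(3 : ℝ) / 2)) := by
  set p : ℝ := -(3 : ℝ) / 2 with hp
  have hint : interior (Set.Ioi (0 : ℝ)) = Set.Ioi 0 := interior_Ioi
  refine convexOn_of_hasDerivWithinAt2_nonneg (convex_Ioi 0)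
      (f' := fun y => p * y ^ (p - 1)) (f'' := fun y => p * ((p - 1) * y ^ (p - 1 - 1)))
      ?_ ?_ ?_ ?_
  · intro x hx
    exact (Real.continuousAt_rpow_const x p (Or.inl (ne_of_gt hx))).continuousWithinAt
  · intro x hx
    rw [hint] at hx
    exact (Real.hasDerivAt_rpow_const (Or.inl (ne_of_gt hx))).hasDerivWithinAt
  · intro x hx
    rw [hint] at hx
    exact ((Real.hasDerivAt_rpow_const (p := p - 1)
      (Or.inl (ne_of_gt hx))).const_mul p).hasDerivWithinAt
  · intro x hx
    rw [hint] at hx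
    have h1 : (0 : ℝ) < x ^ (p - 1 - 1) := Real.rpow_pos_of_pos hx _
    show 0 ≤ p * ((p - 1) * x ^ (p - 1 - 1))
    have heq : p * ((p - 1) * x ^ (p - 1 - 1)) = 15 / 4 * x ^ (p - 1 - 1) := by
      rw [hp]; ring
    rw [heq]
    positivity

/-- For equal staging, the total flight time strictly increases with the number
of stages. -/
theorem equal_staging_flight_time_increasing_in_stages
    (m_d m_b e_b c_T : ℝ) (hmd : 0 < m_d) (hmb : 0 < m_b)
    (heb : 0 < e_b) (hcT : 0 < c_T) :
    ∀ N : ℕ, 1 ≤ N →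
      e_b * c_T * m_b / N *
          ∑ i ∈ Finset.range N, (m_d + (((i : ℝ) + 1) / N) * m_b) ^ (-(3 : ℝ) / 2) <
        e_b * c_T * m_b / (N + 1) *
          ∑ i ∈ Finset.range (N + 1),
            (m_d + (((i : ℝ) + 1) / (N + 1)) * m_b) ^ (-(3 : ℝ) / 2) := by
  intro N hN
  set p : ℝ := -(3 : ℝ) / 2 with hp
  set f : ℝ → ℝ := fun x => (m_d + x * m_b) ^ p with hf
  set n : ℝ := (N : ℝ) with hn
  have hn1 : 1 ≤ n := by rw [hn]; exact_mod_cast hN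
  have hnpos : (0 : ℝ) < n := lt_of_lt_of_le one_pos hn1
  have hn1pos : (0 : ℝ) < n + 1 := by linarith
  -- positivity of bases
  have hbase : ∀ x : ℝ, 0 ≤ x → 0 < m_d + x * m_b := fun x hx => by nlinarith
  -- f is strictly decreasing on nonneg arguments
  have hdec : ∀ x y : ℝ, 0 ≤ x → x < y → f y < f x := by
    intro x y hx hxy
    exact Real.rpow_lt_rpow_of_neg (hbase x hx) (by nlinarith) (by rw [hp]; norm_num)
  -- the key convexity inequality, termwise
  have key : ∀ i ∈ Finset.range N,
      n * f (((i : ℝ) + 1) / n) ≤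
        (n - 1 - i) * f (((i : ℝ) + 1) / (n + 1)) + ((i : ℝ) + 1) * f (((i : ℝ) + 1 + 1) / (n + 1)) := by
    intro i hi
    have hiN : (i : ℝ) ≤ n - 1 := by
      have : (i : ℝ) + 1 ≤ n := by rw [hn]; exact_mod_cast Finset.mem_range.mp hi
      linarith
    set a : ℝ := (n - 1 - i) / n with ha
    set b : ℝ := ((i : ℝ) + 1) / n with hb
    have ha0 : 0 ≤ a := div_nonneg (by linarith) hnpos.le
    have hb0 : 0 < b := div_pos (by positivity) hnpos
    have hab : a + b = 1 := by rw [ha, hb, ← add_div, div_eq_one_iff_eq hnpos.ne']; ring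
    set u : ℝ := ((i : ℝ) + 1) / (n + 1) with hu
    set v : ℝ := ((i : ℝ) + 1 + 1) / (n + 1) with hv
    have hu0 : 0 < u := by positivity
    have hv0 : 0 < v := by positivity
    have hyu : m_d + u * m_b ∈ Set.Ioi (0 : ℝ) := hbase u hu0.le
    have hyv : m_d + v * m_b ∈ Set.Ioi (0 : ℝ) := hbase v hv0.le
    have hcv := aux_convexOn_rpow_neg.2 hyu hyv ha0 hb0.le hab
    simp only [smul_eq_mul] at hcv
    have harg : a * (m_d + u * m_b) + b * (m_d + v * m_b) =
        m_d + (((i : ℝ) + 1) / n) * m_b := by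
      rw [ha, hb, hu, hv]
      field_simp
      ring
    rw [harg] at hcv
    have hcv' : f (((i : ℝ) + 1) / n) ≤ a * f u + b * f v := hcv
    have hna : n * a = n - 1 - i := by rw [ha]; field_simp
    have hnb : n * b = (i : ℝ) + 1 := by rw [hb]; field_simp
    calc n * f (((i : ℝ) + 1) / n) ≤ n * (a * f u + b * f v) :=
          mul_le_mul_of_nonneg_left hcv' hnpos.le
      _ = (n * a) * f u + (n * b) * f v := by ring
      _ = (n - 1 - i) * f u + ((i : ℝ) + 1) * f v := by rw [hna, hnb]
  -- sum the key inequality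
  set g : ℕ → ℝ := fun j => f (((j : ℝ) + 1) / (n + 1)) with hg
  have hsum1 : n * ∑ i ∈ Finset.range N, f (((i : ℝ) + 1) / n) ≤
      ∑ i ∈ Finset.range N, ((n - 1 - i) * g i + ((i : ℝ) + 1) * g (i + 1)) := by
    rw [Finset.mul_sum]
    refine Finset.sum_le_sum ?_
    intro i hi
    have := key i hi
    simpa [hg, Nat.cast_add, Nat.cast_one] using this
  -- rewrite the right side
  have hgN : g N = f 1 := by
    simp only [hg, hn]
    rw [div_self (by positivity)]
  have hsplit : ∑ i ∈ Finset.range N, ((n - 1 - i) * g i + ((i : ℝ) + 1) * g (i + 1)) =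
      (n - 1) * ∑ j ∈ Finset.range (N + 1), g j + f 1 := by
    rw [Finset.sum_add_distrib]
    have h2 : ∑ i ∈ Finset.range N, ((i : ℝ) + 1) * g (i + 1) =
        ∑ j ∈ Finset.range (N + 1), (j : ℝ) * g j := by
      rw [Finset.sum_range_succ' (fun j => (j : ℝ) * g j) N]
      push_cast
      simp
    have h1 : ∑ i ∈ Finset.range N, (n - 1 - i) * g i =
        ∑ j ∈ Finset.range (N + 1), (n - 1 - j) * g j + g N := by
      rw [Finset.sum_range_succ (fun j => (n - 1 - (j : ℝ)) * g j) N]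
      rw [hn]
      ring
    rw [h1, h2, hgN]
    have hc : ∑ j ∈ Finset.range (N + 1), (n - 1 - (j : ℝ)) * g j
        + ∑ j ∈ Finset.range (N + 1), (j : ℝ) * g j
        = (n - 1) * ∑ j ∈ Finset.range (N + 1), g j := by
      rw [← Finset.sum_add_distrib, Finset.mul_sum]
      exact Finset.sum_congr rfl fun j _ => by ring
    linarith
  -- the strict part: sum of g exceeds (n+1) * f 1
  have hstrict : (n + 1) * f 1 < ∑ j ∈ Finset.range (N + 1), g j := by
    have hlt : ∀ j ∈ Finset.range (N + 1), f 1 ≤ g j := by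
      intro j hj
      have hj' : (j : ℝ) + 1 ≤ n + 1 := by
        have : (j : ℝ) ≤ n := by rw [hn]; exact_mod_cast Nat.lt_succ_iff.mp (Finset.mem_range.mp hj)
        linarith
      rcases eq_or_lt_of_le hj' with h | h
      · simp [hg, h, div_self hn1pos.ne']
      · exact (hdec _ 1 (by positivity) ((div_lt_one hn1pos).mpr h)).le
    have h0 : f 1 < g 0 := by
      have : ((0 : ℕ) : ℝ) + 1 < n + 1 := by push_cast; linarith
      exact hdec _ 1 (by positivity) ((div_lt_one hn1pos).mpr this)
    have hmem : (0 : ℕ) ∈ Finset.range (N + 1) := Finset.mem_range.mpr (Nat.succ_pos N)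
    calc (n + 1) * f 1 = ∑ _j ∈ Finset.range (N + 1), f 1 := by
          rw [Finset.sum_const, Finset.card_range]; push_cast [hn]; ring
      _ < ∑ j ∈ Finset.range (N + 1), g j :=
          Finset.sum_lt_sum hlt ⟨0, hmem, h0⟩
  -- combine
  set S : ℝ := ∑ i ∈ Finset.range N, f (((i : ℝ) + 1) / n) with hS
  set T : ℝ := ∑ j ∈ Finset.range (N + 1), g j with hT
  have hmain : n * S ≤ (n - 1) * T + f 1 := by
    calc n * S ≤ _ := hsum1
      _ = (n - 1) * T + f 1 := hsplit
  have hfinal : (n + 1) * S < n * T := by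
    have h1 : (n + 1) * (n * S) ≤ (n + 1) * ((n - 1) * T + f 1) :=
      mul_le_mul_of_nonneg_left hmain hn1pos.le
    have h2 : (n + 1) * ((n - 1) * T + f 1) < (n * n) * T := by
      nlinarith [hstrict]
    have h3 : n * ((n + 1) * S) < n * (n * T) := by nlinarith
    exact lt_of_mul_lt_mul_left h3 hnpos.le
  -- translate to the goal
  have hA : 0 < e_b * c_T * m_b := by positivity
  have goal_eq1 : e_b * c_T * m_b / n * S =
      e_b * c_T * m_b / (n * (n + 1)) * ((n + 1) * S) := by
    field_simp
  have goal_eq2 : e_b * c_T * m_b / (n + 1) * T =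
      e_b * c_T * m_b / (n * (n + 1)) * (n * T) := by
    field_simp
  have : e_b * c_T * m_b / n * S < e_b * c_T * m_b / (n + 1) * T := by
    rw [goal_eq1, goal_eq2]
    exact mul_lt_mul_of_pos_left hfinal (by positivity)
  exact this
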